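/- Let V = K² with the SL(2,Z)-action where s = [[0,1],[-1,0]] acts by s·e1 = -e2, s·e2 = -e1; t = [[1,1],[0,1]] acts by t·e1 = e1, t·e2 = e1 - e2; and r = [[1,0],[1,1]] acts by r·e1 = e2 - e1, r·e2 = e2 (for char K ≠ 2,3). Then the subspace of V ⊗ V invariant under the diagonal action of the group generated by (s,s), (t,t), (r,r) is one-dimensional, spanned by -2 e1⊗e1 + e1⊗e2 + e2⊗e1 - 2 e2⊗e2. -/

import Mathlib

open TensorProduct

/-- The action of `s = [[0,1],[-1,0]]` on `V = K²` (`s·e₁ = -e₂`, `s·e₂ = -e₁`). -/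
noncomputable def sAct (K : Type) [Field K] : (Fin 2 → K) →ₗ[K] (Fin 2 → K) :=
  Matrix.toLin' !![(0 : K), -1; -1, 0]

/-- The action of `t = [[1,1],[0,1]]` on `V = K²` (`t·e₁ = e₁`, `t·e₂ = e₁ - e₂`). -/
noncomputable def tAct (K : Type) [Field K] : (Fin 2 → K) →ₗ[K] (Fin 2 → K) :=
  Matrix.toLin' !![(1 : K), 1; 0, -1]

/-- The action of `r = [[1,0],[1,1]]` on `V = K²` (`r·e₁ = e₂ - e₁`, `r·e₂ = e₂`). -/
noncomputable def rAct (K : Type) [Field K] : (Fin 2 → K) →ₗ[K] (Fin 2 → K) :=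
  Matrix.toLin' !![(-1 : K), 0; 1, 1]

section aux
variable (K : Type) [Field K]

lemma sAct_e0 : sAct K (Pi.single 0 1) = -(Pi.single 1 1 : Fin 2 → K) := by
  unfold sAct; rw [Matrix.toLin'_apply, Matrix.mulVec_single_one]
  funext i; fin_cases i <;> simp
lemma sAct_e1 : sAct K (Pi.single 1 1) = -(Pi.single 0 1 : Fin 2 → K) := by
  unfold sAct; rw [Matrix.toLin'_apply, Matrix.mulVec_single_one]
  funext i; fin_cases i <;> simp
lemma tAct_e0 : tAct K (Pi.single 0 1) = (Pi.single 0 1 : Fin 2 → K) := by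
  unfold tAct; rw [Matrix.toLin'_apply, Matrix.mulVec_single_one]
  funext i; fin_cases i <;> simp
lemma tAct_e1 : tAct K (Pi.single 1 1) = (Pi.single 0 1 : Fin 2 → K) - Pi.single 1 1 := by
  unfold tAct; rw [Matrix.toLin'_apply, Matrix.mulVec_single_one]
  funext i; fin_cases i <;> simp
lemma rAct_e0 : rAct K (Pi.single 0 1) = (Pi.single 1 1 : Fin 2 → K) - Pi.single 0 1 := by
  unfold rAct; rw [Matrix.toLin'_apply, Matrix.mulVec_single_one]
  funext i; fin_cases i <;> simp
lemma rAct_e1 : rAct K (Pi.single 1 1) = (Pi.single 1 1 : Fin 2 → K) := by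
  unfold rAct; rw [Matrix.toLin'_apply, Matrix.mulVec_single_one]
  funext i; fin_cases i <;> simp

end aux

set_option maxHeartbeats 1000000 in
/-- Let `V = K²` (char `K ≠ 2, 3`) with the `SL(2,𝔽₂)`-action where `s·e₁ = -e₂, s·e₂ = -e₁`,
`t·e₁ = e₁, t·e₂ = e₁ - e₂`, `r·e₁ = e₂ - e₁, r·e₂ = e₂`.  Then the subspace of `V ⊗ V`
invariant under the diagonal action of the group generated by `(s,s), (t,t), (r,r)` is
one-dimensional, spanned by `-2 e₁⊗e₁ + e₁⊗e₂ + e₂⊗e₁ - 2 e₂⊗e₂`. -/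
theorem diagonal_invariants_one_dimensional
    (K : Type) [Field K] (h2 : (2 : K) ≠ 0) (h3 : (3 : K) ≠ 0) :
    {w : TensorProduct K (Fin 2 → K) (Fin 2 → K) |
        TensorProduct.map (sAct K) (sAct K) w = w ∧
        TensorProduct.map (tAct K) (tAct K) w = w ∧
        TensorProduct.map (rAct K) (rAct K) w = w} =
      (Submodule.span K
        {(-(2 : K)) • ((Pi.single 0 1 : Fin 2 → K) ⊗ₜ[K] (Pi.single 0 1 : Fin 2 → K)) +
          (Pi.single 0 1 : Fin 2 → K) ⊗ₜ[K] (Pi.single 1 1 : Fin 2 → K) +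
          (Pi.single 1 1 : Fin 2 → K) ⊗ₜ[K] (Pi.single 0 1 : Fin 2 → K) -
          (2 : K) • ((Pi.single 1 1 : Fin 2 → K) ⊗ₜ[K] (Pi.single 1 1 : Fin 2 → K))} :
        Set (TensorProduct K (Fin 2 → K) (Fin 2 → K))) := by
  ext w
  simp only [Set.mem_setOf_eq, SetLike.mem_coe, Submodule.mem_span_singleton]
  have B := (Pi.basisFun K (Fin 2)).tensorProduct (Pi.basisFun K (Fin 2))
  constructor
  · rintro ⟨hs, ht, hr⟩
    set B := (Pi.basisFun K (Fin 2)).tensorProduct (Pi.basisFun K (Fin 2)) with hB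
    have hBapp : ∀ i j : Fin 2, B (i, j) = (Pi.single i 1 : Fin 2 → K) ⊗ₜ[K] Pi.single j 1 := by
      intro i j
      rw [Module.Basis.tensorProduct_apply]
      simp [Pi.basisFun_apply]
    have hw : w = B.repr w (0,0) • ((Pi.single 0 1 : Fin 2 → K) ⊗ₜ[K] (Pi.single 0 1 : Fin 2 → K))
        + B.repr w (0,1) • ((Pi.single 0 1 : Fin 2 → K) ⊗ₜ[K] (Pi.single 1 1 : Fin 2 → K))
        + B.repr w (1,0) • ((Pi.single 1 1 : Fin 2 → K) ⊗ₜ[K] (Pi.single 0 1 : Fin 2 → K))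
        + B.repr w (1,1) • ((Pi.single 1 1 : Fin 2 → K) ⊗ₜ[K] (Pi.single 1 1 : Fin 2 → K)) := by
      conv_lhs => rw [← B.sum_repr w]
      rw [Fintype.sum_prod_type]
      simp [Fin.sum_univ_two, hBapp]
      abel
    set a := B.repr w (0,0) with ha
    set b := B.repr w (0,1) with hbb
    set c := B.repr w (1,0) with hc
    set d := B.repr w (1,1) with hd
    rw [hw] at hs ht
    simp only [map_add, map_smul, TensorProduct.map_tmul, sAct_e0, sAct_e1, tAct_e0, tAct_e1,
      TensorProduct.tmul_neg, TensorProduct.neg_tmul, TensorProduct.tmul_sub,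
      TensorProduct.sub_tmul, neg_neg, smul_neg, smul_sub] at hs ht
    have hs' := fun (p : Fin 2 × Fin 2) => congrArg (fun u => B.repr u p) hs
    have ht' := fun (p : Fin 2 × Fin 2) => congrArg (fun u => B.repr u p) ht
    simp only [map_add, map_sub, map_smul, map_neg, Finsupp.add_apply, Finsupp.sub_apply,
      Finsupp.smul_apply, Finsupp.neg_apply, hB, Module.Basis.tensorProduct_repr_tmul_apply,
      Pi.basisFun_repr] at hs' ht'
    have e00s := hs' (0,0)
    have e01s := hs' (0,1)
    have e00t := ht' (0,0)
    have e01t := ht' (0,1)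
    have e10t := ht' (1,0)
    simp only [Module.Basis.tensorProduct_repr_tmul_apply, Pi.basisFun_repr, Pi.single_apply,
      if_true, smul_eq_mul, mul_one, mul_zero, zero_mul, one_mul, add_zero, zero_add,
      sub_zero, zero_sub, mul_ite, ite_mul, Fin.zero_eq_one_iff, Fin.one_eq_zero_iff,
      Nat.succ_ne_self, if_false, ← Fin.val_eq_val] at e00s e01s e00t e01t e10t
    norm_num at e00s e01s e00t e01t e10t
    refine ⟨b, ?_⟩
    rw [hw]
    have had : a = -(2*b) := by linear_combination -e00s - e01t
    have hdd : d = -(2*b) := by linear_combination -e01t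
    have hcc : c = b := by linear_combination e01s
    rw [had, hdd, hcc]
    module
  · rintro ⟨cc, rfl⟩
    refine ⟨?_, ?_, ?_⟩ <;>
    · rw [LinearMap.map_smul]
      congr 1
      simp only [map_add, map_sub, LinearMap.map_smul, TensorProduct.map_tmul,
        sAct_e0, sAct_e1, tAct_e0, tAct_e1, rAct_e0, rAct_e1,
        TensorProduct.tmul_neg, TensorProduct.neg_tmul, TensorProduct.tmul_sub,
        TensorProduct.sub_tmul, neg_neg]
      module
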